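/- There is an absolute constant C > 0 such that for every uncertain point set P of n points (n ≥ 2) each with k locations in ℝ¹, RE-disc(P, 𝓘₊) ≤ C·√k·log n, where 𝓘₊ is the family of one-sided intervals (−∞, x]. -/

import Mathlib

open Finset
open scoped Classical

noncomputable section

/-- The probability that an uncertain point with `k` possible locations `p 0, …, p (k-1)`,
each taken with probability `1/k`, lies in the range `r`. -/
def probIn {α : Type*} {k : ℕ} (p : Fin k → α) (r : Set α) : ℝ :=
  ((Finset.univ.filter fun j => p j ∈ r).card : ℝ) / k

/-- `E_{r(S)}`: the expected fraction of the uncertain points indexed by `S`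
that lie in the range `r`, for the uncertain point set `P`. -/
def REexp {α : Type*} {n k : ℕ} (P : Fin n → Fin k → α) (S : Finset (Fin n)) (r : Set α) : ℝ :=
  (∑ i ∈ S, probIn (P i) r) / S.card

/-- `P_χ^+`: the uncertain points colored `+1` by `χ`. -/
def Pplus {n : ℕ} (χ : Fin n → ℤ) : Finset (Fin n) :=
  Finset.univ.filter fun i => χ i = 1

/-- `RE-disc_χ(P, r) = |P| · |E_{r(P_χ^+)} - E_{r(P)}|`. -/
def REdisc {α : Type*} {n k : ℕ} (P : Fin n → Fin k → α) (χ : Fin n → ℤ) (r : Set α) : ℝ :=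
  n * |REexp P (Pplus χ) r - REexp P Finset.univ r|

/-- `𝓘₊`: the family of one-sided intervals `(-∞, x] ⊆ ℝ`. -/
def IicFam : Set (Set ℝ) := {r | ∃ x : ℝ, r = Set.Iic x}

namespace Stmt6Aux


/-- sum of ±1 values over a finset -/
lemma sum_pm {n : ℕ} (B : Finset (Fin n)) (χ : Fin n → ℝ)
    (h : ∀ i ∈ B, χ i = 1 ∨ χ i = -1) :
    ∑ i ∈ B, χ i = 2 * (B.filter fun i => χ i = 1).card - B.card := by
  rw [← Finset.sum_filter_add_sum_filter_not B (fun i => χ i = 1)]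
  have h1 : ∑ i ∈ B.filter (fun i => χ i = 1), χ i
      = (B.filter fun i => χ i = 1).card := by
    rw [Finset.sum_congr rfl (fun i hi => (Finset.mem_filter.mp hi).2)]
    simp
  have h2 : ∑ i ∈ B.filter (fun i => ¬ χ i = 1), χ i
      = -((B.filter fun i => ¬ χ i = 1).card) := by
    have : ∀ i ∈ B.filter (fun i => ¬ χ i = 1), χ i = -1 := by
      intro i hi
      rcases Finset.mem_filter.mp hi with ⟨hiB, hne⟩
      rcases h i hiB with h' | h'
      · exact absurd h' hne
      · exact h'
    rw [Finset.sum_congr rfl this]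
    simp
  rw [h1, h2]
  have hcard : (B.filter fun i => χ i = 1).card + (B.filter fun i => ¬ χ i = 1).card
      = B.card := Finset.card_filter_add_card_filter_not _
  have : ((B.filter fun i => ¬ χ i = 1).card : ℝ)
      = (B.card : ℝ) - (B.filter fun i => χ i = 1).card := by
    have := hcard
    push_cast [← this]
    ring
  rw [this]; ring

/-- Lemma A: linear-algebraic rounding. Given `M` linear constraints, any point of the
cube `[-1,1]^A` can be moved to a point with at most `M` non-`±1` coordinates while
preserving all constraints. -/
lemma exists_rounding {n M : ℕ} (c : Fin M → Fin n → ℝ) :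
    ∀ (f : ℕ) (A : Finset (Fin n)) (χ0 : Fin n → ℝ),
    (A.filter fun i => χ0 i ≠ 1 ∧ χ0 i ≠ -1).card ≤ f →
    (∀ i ∈ A, |χ0 i| ≤ 1) →
    ∃ χ : Fin n → ℝ,
      (∀ i, i ∉ A → χ i = χ0 i) ∧ (∀ i ∈ A, |χ i| ≤ 1) ∧
      (∀ s, ∑ i ∈ A, χ i * c s i = ∑ i ∈ A, χ0 i * c s i) ∧
      (A.filter fun i => χ i ≠ 1 ∧ χ i ≠ -1).card ≤ M := by
  intro f
  induction f with
  | zero =>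
    intro A χ0 hcard hbox
    exact ⟨χ0, fun i _ => rfl, hbox, fun s => rfl, le_trans hcard (Nat.zero_le M)⟩
  | succ f IH =>
    intro A χ0 hcard hbox
    by_cases hM : (A.filter fun i => χ0 i ≠ 1 ∧ χ0 i ≠ -1).card ≤ M
    · exact ⟨χ0, fun i _ => rfl, hbox, fun s => rfl, hM⟩
    push_neg at hM
    set F : Finset (Fin n) := A.filter fun i => χ0 i ≠ 1 ∧ χ0 i ≠ -1 with hF
    have hFA : F ⊆ A := Finset.filter_subset _ _
    -- find a nonzero kernel vector supported on F
    have hker : ∃ u : (↥F) → ℝ, u ≠ 0 ∧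
        ∀ s : Fin M, ∑ i : ↥F, u i * c s i = 0 := by
      set L : ((↥F) → ℝ) →ₗ[ℝ] (Fin M → ℝ) :=
        (Matrix.of fun (s : Fin M) (i : ↥F) => c s (i : Fin n)).mulVecLin with hL
      by_cases hinj : Function.Injective L
      · exfalso
        have h1 : Module.finrank ℝ ((↥F) → ℝ) ≤ Module.finrank ℝ (Fin M → ℝ) :=
          LinearMap.finrank_le_finrank_of_injective hinj
        rw [Module.finrank_fintype_fun_eq_card, Module.finrank_fintype_fun_eq_card] at h1
        simp only [Fintype.card_coe, Fintype.card_fin] at h1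
        omega
      · rw [injective_iff_map_eq_zero] at hinj
        push_neg at hinj
        obtain ⟨u, hu0, hune⟩ := hinj
        refine ⟨u, hune, fun s => ?_⟩
        have := congrFun hu0 s
        simp only [hL, Matrix.mulVecLin_apply, Matrix.mulVec, dotProduct,
          Matrix.of_apply, Pi.zero_apply] at this
        rw [← this]
        exact Finset.sum_congr rfl (fun i _ => mul_comm _ _)
    obtain ⟨u, hune, huker⟩ := hker
    set v : Fin n → ℝ := fun i => if h : i ∈ F then u ⟨i, h⟩ else 0 with hv
    have hv_supp : ∀ i, i ∉ F → v i = 0 := fun i hi => dif_neg hi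
    have hv_ker : ∀ s, ∑ i ∈ F, v i * c s i = 0 := by
      intro s
      rw [← Finset.sum_attach F (fun i => v i * c s i)]
      rw [← huker s]
      refine Finset.sum_congr rfl (fun i _ => ?_)
      simp [hv, i.2]
    have hT : ∃ i ∈ F, v i ≠ 0 := by
      have : ∃ j : ↥F, u j ≠ 0 := by
        by_contra h
        push_neg at h
        exact hune (funext fun j => h j)
      obtain ⟨j, hj⟩ := this
      exact ⟨j, j.2, by simpa [hv, j.2] using hj⟩
    set T : Finset (Fin n) := F.filter fun i => v i ≠ 0 with hTdef
    have hTne : T.Nonempty := by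
      obtain ⟨i, hiF, hiv⟩ := hT
      exact ⟨i, Finset.mem_filter.mpr ⟨hiF, hiv⟩⟩
    set st : Fin n → ℝ := fun i =>
      if 0 < v i then (1 - χ0 i) / v i else (-1 - χ0 i) / v i with hst
    have hfrac : ∀ i ∈ F, -1 < χ0 i ∧ χ0 i < 1 := by
      intro i hi
      rcases Finset.mem_filter.mp hi with ⟨hiA, hne1, hne2⟩
      rcases abs_le.mp (hbox i hiA) with ⟨hl, hr⟩
      exact ⟨lt_of_le_of_ne hl (Ne.symm hne2), lt_of_le_of_ne hr hne1⟩
    have hst_pos : ∀ i ∈ T, 0 < st i := by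
      intro i hi
      rcases Finset.mem_filter.mp hi with ⟨hiF, hiv⟩
      rcases hfrac i hiF with ⟨hl, hr⟩
      by_cases hpos : 0 < v i
      · simp only [hst, if_pos hpos]
        exact div_pos (by linarith) hpos
      · have hneg : v i < 0 := lt_of_le_of_ne (not_lt.mp hpos) hiv
        simp only [hst, if_neg hpos]
        exact div_pos_of_neg_of_neg (by linarith) hneg
    obtain ⟨i0, hi0T, hi0min⟩ := T.exists_min_image st hTne
    set t : ℝ := st i0 with ht
    have ht_pos : 0 < t := hst_pos i0 hi0T
    set χ1 : Fin n → ℝ := fun i => χ0 i + t * v i with hχ1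
    have hχ1_eq : ∀ i, i ∉ T → χ1 i = χ0 i := by
      intro i hi
      by_cases hiF : i ∈ F
      · have : v i = 0 := by
          by_contra h
          exact hi (Finset.mem_filter.mpr ⟨hiF, h⟩)
        simp [hχ1, this]
      · simp [hχ1, hv_supp i hiF]
    -- box bounds for χ1
    have hbox1 : ∀ i ∈ A, |χ1 i| ≤ 1 := by
      intro i hiA
      by_cases hiT : i ∈ T
      · rcases Finset.mem_filter.mp hiT with ⟨hiF, hiv⟩
        rcases hfrac i hiF with ⟨hl, hr⟩
        have htle : t ≤ st i := hi0min i hiT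
        rw [abs_le]
        by_cases hpos : 0 < v i
        · constructor
          · have hp := mul_pos ht_pos hpos
            simp only [hχ1]; linarith
          · have : t * v i ≤ st i * v i := mul_le_mul_of_nonneg_right htle (le_of_lt hpos)
            have hsti : st i * v i = 1 - χ0 i := by
              simp only [hst, if_pos hpos]
              field_simp
            simp only [hχ1]; nlinarith
        · have hneg : v i < 0 := lt_of_le_of_ne (not_lt.mp hpos) hiv
          constructor
          · have : st i * v i ≤ t * v i := mul_le_mul_of_nonpos_right htle (le_of_lt hneg)
            have hsti : st i * v i = -1 - χ0 i := by
              simp only [hst, if_neg hpos]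
              field_simp
            simp only [hχ1]; nlinarith
          · have hp := mul_neg_of_pos_of_neg ht_pos hneg
            simp only [hχ1]; linarith
      · rw [hχ1_eq i hiT]; exact hbox i hiA
    -- i0 becomes ±1
    have hi0pm : χ1 i0 = 1 ∨ χ1 i0 = -1 := by
      rcases Finset.mem_filter.mp hi0T with ⟨hiF, hiv⟩
      by_cases hpos : 0 < v i0
      · left
        simp only [hχ1, ht, hst, if_pos hpos]
        field_simp
        ring
      · right
        simp only [hχ1, ht, hst, if_neg hpos]
        field_simp
        ring
    -- constraints preserved
    have hcons1 : ∀ s, ∑ i ∈ A, χ1 i * c s i = ∑ i ∈ A, χ0 i * c s i := by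
      intro s
      have hsplit : ∑ i ∈ A, χ1 i * c s i
          = ∑ i ∈ A, χ0 i * c s i + t * ∑ i ∈ A, v i * c s i := by
        rw [Finset.mul_sum, ← Finset.sum_add_distrib]
        exact Finset.sum_congr rfl (fun i _ => by simp only [hχ1]; ring)
      have hAF : ∑ i ∈ A, v i * c s i = ∑ i ∈ F, v i * c s i := by
        refine (Finset.sum_subset hFA (fun i hiA hiF => ?_)).symm
        rw [hv_supp i hiF, zero_mul]
      rw [hsplit, hAF, hv_ker s, mul_zero, add_zero]
    -- fractional set decreases
    have hle : (A.filter fun i => χ1 i ≠ 1 ∧ χ1 i ≠ -1).card ≤ f := by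
      have hsub : (A.filter fun i => χ1 i ≠ 1 ∧ χ1 i ≠ -1) ⊆ F.erase i0 := by
        intro i hi
        rcases Finset.mem_filter.mp hi with ⟨hiA, hfr⟩
        have hiF : i ∈ F := by
          by_contra hiF
          have : χ1 i = χ0 i := by
            apply hχ1_eq
            intro hiT
            exact hiF (Finset.mem_filter.mp hiT).1
          rw [this] at hfr
          have : i ∈ F := Finset.mem_filter.mpr ⟨hiA, hfr⟩
          exact hiF this
        refine Finset.mem_erase.mpr ⟨?_, hiF⟩
        intro h
        subst h
        rcases hi0pm with h | h
        · exact hfr.1 h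
        · exact hfr.2 h
      calc (A.filter fun i => χ1 i ≠ 1 ∧ χ1 i ≠ -1).card
          ≤ (F.erase i0).card := Finset.card_le_card hsub
        _ = F.card - 1 := Finset.card_erase_of_mem (Finset.mem_of_mem_filter i0 hi0T)
        _ ≤ f := by omega
    obtain ⟨χ, hoff, hbx, hcons, hfin⟩ := IH A χ1 hle hbox1
    refine ⟨χ, ?_, hbx, ?_, hfin⟩
    · intro i hiA
      rw [hoff i hiA]
      apply hχ1_eq
      intro hiT
      exact hiA (hFA (Finset.mem_of_mem_filter i hiT))
    · intro s
      rw [hcons s, hcons1 s]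


variable {n k : ℕ}
def g (P : Fin n → Fin k → ℝ) (i : Fin n) (x : ℝ) : ℝ := probIn (P i) (Set.Iic x)

def NA (P : Fin n → Fin k → ℝ) (A : Finset (Fin n)) (x : ℝ) : ℕ :=
  ∑ i ∈ A, (Finset.univ.filter fun j => P i j ≤ x).card

def CA (P : Fin n → Fin k → ℝ) (A : Finset (Fin n)) : Finset ℝ :=
  A.biUnion fun i => Finset.image (P i) Finset.univ

lemma g_eq (P : Fin n → Fin k → ℝ) (i : Fin n) (x : ℝ) :
    g P i x = ((Finset.univ.filter fun j => P i j ≤ x).card : ℝ) / k := by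
  simp only [g, probIn, Set.mem_Iic]

lemma g_nonneg (P : Fin n → Fin k → ℝ) (i : Fin n) (x : ℝ) : 0 ≤ g P i x := by
  rw [g_eq]; positivity

lemma g_le_one (hk : 0 < k) (P : Fin n → Fin k → ℝ) (i : Fin n) (x : ℝ) :
    g P i x ≤ 1 := by
  rw [g_eq, div_le_one (by exact_mod_cast hk)]
  exact_mod_cast (Finset.card_filter_le _ _).trans (by simp)

lemma filter_le_subset (P : Fin n → Fin k → ℝ) (i : Fin n) {x y : ℝ} (h : x ≤ y) :
    (Finset.univ.filter fun j => P i j ≤ x) ⊆ (Finset.univ.filter fun j => P i j ≤ y) := by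
  intro j hj
  rcases Finset.mem_filter.mp hj with ⟨-, hjx⟩
  exact Finset.mem_filter.mpr ⟨Finset.mem_univ j, le_trans hjx h⟩

lemma g_mono (P : Fin n → Fin k → ℝ) (i : Fin n) {x y : ℝ} (h : x ≤ y) :
    g P i x ≤ g P i y := by
  rw [g_eq, g_eq]
  refine div_le_div_of_nonneg_right ?_ (Nat.cast_nonneg k)
  exact_mod_cast Finset.card_le_card (filter_le_subset P i h)

lemma sum_g (P : Fin n → Fin k → ℝ) (A : Finset (Fin n)) (x : ℝ) :
    ∑ i ∈ A, g P i x = (NA P A x : ℝ) / k := by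
  simp only [g_eq, NA]
  rw [← Finset.sum_div]
  push_cast
  ring

lemma NA_mono (P : Fin n → Fin k → ℝ) (A : Finset (Fin n)) {x y : ℝ} (h : x ≤ y) :
    NA P A x ≤ NA P A y := by
  apply Finset.sum_le_sum
  intro i _
  exact Finset.card_le_card (filter_le_subset P i h)

lemma NA_le (P : Fin n → Fin k → ℝ) (A : Finset (Fin n)) (x : ℝ) :
    NA P A x ≤ A.card * k := by
  unfold NA
  calc ∑ i ∈ A, (Finset.univ.filter fun j => P i j ≤ x).card
      ≤ ∑ i ∈ A, k := by
        apply Finset.sum_le_sum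
        intro i _
        exact (Finset.card_filter_le _ _).trans (by simp)
    _ = A.card * k := by rw [Finset.sum_const, smul_eq_mul]

lemma mem_CA {P : Fin n → Fin k → ℝ} {A : Finset (Fin n)} {i : Fin n} (hi : i ∈ A)
    (j : Fin k) : P i j ∈ CA P A := by
  apply Finset.mem_biUnion.mpr
  exact ⟨i, hi, Finset.mem_image.mpr ⟨j, Finset.mem_univ j, rfl⟩⟩

lemma CA_nonempty (hk : 0 < k) {P : Fin n → Fin k → ℝ} {A : Finset (Fin n)}
    (hA : A.Nonempty) : (CA P A).Nonempty := by
  obtain ⟨i, hi⟩ := hA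
  exact ⟨P i ⟨0, hk⟩, mem_CA hi _⟩

lemma NA_max (hk : 0 < k) (P : Fin n → Fin k → ℝ) {A : Finset (Fin n)}
    (hA : A.Nonempty) : ∃ v ∈ CA P A, NA P A v = A.card * k := by
  have hC := CA_nonempty hk (P := P) hA
  refine ⟨(CA P A).max' hC, Finset.max'_mem _ _, ?_⟩
  unfold NA
  have : ∀ i ∈ A, (Finset.univ.filter fun j => P i j ≤ (CA P A).max' hC).card = k := by
    intro i hi
    have : (Finset.univ.filter fun j => P i j ≤ (CA P A).max' hC) = Finset.univ := by
      apply Finset.filter_true_of_mem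
      intro j _
      exact Finset.le_max' _ _ (mem_CA hi j)
    rw [this]; simp
  rw [Finset.sum_congr rfl this, Finset.sum_const, smul_eq_mul]

lemma exists_le_eq (P : Fin n → Fin k → ℝ) (A : Finset (Fin n)) (x : ℝ)
    (h : 0 < NA P A x) : ∃ v ∈ CA P A, v ≤ x ∧ NA P A v = NA P A x := by
  set D := (CA P A).filter (fun v => v ≤ x) with hD
  have hDne : D.Nonempty := by
    have : ∃ i ∈ A, 0 < (Finset.univ.filter fun j => P i j ≤ x).card := by
      by_contra hcon
      push_neg at hcon
      have : NA P A x = 0 := by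
        unfold NA
        apply Finset.sum_eq_zero
        intro i hi
        exact Nat.le_zero.mp (hcon i hi)
      omega
    obtain ⟨i, hi, hpos⟩ := this
    obtain ⟨j, hj⟩ := Finset.card_pos.mp hpos
    rcases Finset.mem_filter.mp hj with ⟨-, hjx⟩
    exact ⟨P i j, Finset.mem_filter.mpr ⟨mem_CA hi j, hjx⟩⟩
  set v := D.max' hDne with hv
  have hvD : v ∈ D := Finset.max'_mem _ _
  rcases Finset.mem_filter.mp hvD with ⟨hvC, hvx⟩
  refine ⟨v, hvC, hvx, le_antisymm (NA_mono P A hvx) ?_⟩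
  apply Finset.sum_le_sum
  intro i hi
  apply Finset.card_le_card
  intro j hj
  rcases Finset.mem_filter.mp hj with ⟨-, hjx⟩
  have hmemD : P i j ∈ D := Finset.mem_filter.mpr ⟨mem_CA hi j, hjx⟩
  have : P i j ≤ v := Finset.le_max' D _ hmemD
  exact Finset.mem_filter.mpr ⟨Finset.mem_univ j, this⟩

lemma abs_diff_le_two {x y : ℝ} (hx : |x| ≤ 1) (hy : |y| ≤ 1) : |x - y| ≤ 2 := by
  rw [abs_le] at *
  constructor <;> [linarith; linarith]

lemma main_lemma (hk : 0 < k) (P : Fin n → Fin k → ℝ) :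
    ∀ (a : ℕ) (A : Finset (Fin n)), A.card = a →
    ∀ (χ0 : Fin n → ℝ), (∀ i ∈ A, |χ0 i| ≤ 1) →
    ∀ z : ℤ, ∑ i ∈ A, χ0 i = (z : ℝ) → Even (z + a) →
    ∃ χ : Fin n → ℝ,
      (∀ i, i ∉ A → χ i = χ0 i) ∧
      (∀ i ∈ A, χ i = 1 ∨ χ i = -1) ∧
      ∑ i ∈ A, χ i = (z : ℝ) ∧
      ∀ x : ℝ, |∑ i ∈ A, (χ i - χ0 i) * g P i x| ≤ 8 * Nat.log 2 a + 8 := by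
  intro a
  induction a using Nat.strong_induction_on with
  | _ a IH =>
  intro A hA χ0 hbox z hz hpar
  have hkR : (0 : ℝ) < k := by exact_mod_cast hk
  by_cases hsmall : a ≤ 4
  · -- base case: only the balance constraint
    obtain ⟨χ1, hoff1, hbox1, hcons1, hfrac1⟩ :=
      exists_rounding (M := 1) (fun _ _ => (1 : ℝ)) a A χ0
        (by rw [← hA]; exact Finset.card_filter_le _ _) hbox
    have hsum1 : ∑ i ∈ A, χ1 i = ∑ i ∈ A, χ0 i := by
      have := hcons1 ⟨0, by omega⟩
      simpa using this
    have hall : ∀ i ∈ A, χ1 i = 1 ∨ χ1 i = -1 := by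
      by_contra hcon
      push_neg at hcon
      obtain ⟨i0, hi0A, hne1, hne2⟩ := hcon
      have hi0F : i0 ∈ A.filter fun i => χ1 i ≠ 1 ∧ χ1 i ≠ -1 :=
        Finset.mem_filter.mpr ⟨hi0A, hne1, hne2⟩
      set B := A.erase i0 with hB
      have hBpm : ∀ i ∈ B, χ1 i = 1 ∨ χ1 i = -1 := by
        intro i hi
        rcases Finset.mem_erase.mp hi with ⟨hine, hiA⟩
        by_contra hipm
        push_neg at hipm
        have hiF : i ∈ A.filter fun i => χ1 i ≠ 1 ∧ χ1 i ≠ -1 :=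
          Finset.mem_filter.mpr ⟨hiA, hipm.1, hipm.2⟩
        have := Finset.card_le_one.mp hfrac1 i hiF i0 hi0F
        exact hine this
      set p := (B.filter fun i => χ1 i = 1).card with hp
      have hsumB : ∑ i ∈ B, χ1 i = 2 * p - B.card := sum_pm B χ1 hBpm
      have hsplit : χ1 i0 + ∑ i ∈ B, χ1 i = ∑ i ∈ A, χ1 i :=
        Finset.add_sum_erase A χ1 hi0A
      set z' : ℤ := z - 2 * p + B.card with hz'
      have hχz' : χ1 i0 = (z' : ℝ) := by
        have h1 : ∑ i ∈ A, χ1 i = (z : ℝ) := by rw [hsum1, hz]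
        push_cast [hz']
        linarith [hsplit, hsumB, h1]
      have habs : |z'| ≤ 1 := by
        have h1 : |(z' : ℝ)| ≤ 1 := by rw [← hχz']; exact hbox1 i0 hi0A
        have h2 : ((|z'| : ℤ) : ℝ) ≤ 1 := by rw [Int.cast_abs]; exact h1
        exact_mod_cast h2
      have hBc : B.card + 1 = a := by
        rw [hB, Finset.card_erase_of_mem hi0A, hA]
        have : 0 < a := by rw [← hA]; exact Finset.card_pos.mpr ⟨i0, hi0A⟩
        omega
      obtain ⟨w, hw⟩ := hpar
      have hz'pm : z' = 1 ∨ z' = -1 := by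
        have h1 := abs_le.mp habs
        have h2 : (B.card : ℤ) + 1 = (a : ℤ) := by exact_mod_cast hBc
        omega
      rcases hz'pm with h | h
      · exact hne1 (by rw [hχz', h]; norm_num)
      · exact hne2 (by rw [hχz', h]; norm_num)
    refine ⟨χ1, hoff1, hall, by rw [hsum1, hz], ?_⟩
    intro x
    calc |∑ i ∈ A, (χ1 i - χ0 i) * g P i x|
        ≤ ∑ i ∈ A, |(χ1 i - χ0 i) * g P i x| := Finset.abs_sum_le_sum_abs _ _
      _ ≤ ∑ i ∈ A, 2 := by
          apply Finset.sum_le_sum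
          intro i hi
          rw [abs_mul]
          have h1 : |χ1 i - χ0 i| ≤ 2 := abs_diff_le_two (hbox1 i hi) (hbox i hi)
          have h2 : |g P i x| ≤ 1 := by
            rw [abs_of_nonneg (g_nonneg P i x)]; exact g_le_one hk P i x
          calc |χ1 i - χ0 i| * |g P i x| ≤ 2 * 1 :=
                mul_le_mul h1 h2 (abs_nonneg _) (by norm_num)
            _ = 2 := by norm_num
      _ = 2 * a := by rw [Finset.sum_const, hA, nsmul_eq_mul]; ring
      _ ≤ 8 * Nat.log 2 a + 8 := by
          have h0 : (0:ℝ) ≤ (Nat.log 2 a : ℝ) := Nat.cast_nonneg _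
          have haR : (a : ℝ) ≤ 4 := by exact_mod_cast hsmall
          linarith
  · -- recursive case
    push_neg at hsmall
    have h5a : 5 ≤ a := hsmall
    have hAne : A.Nonempty := Finset.card_pos.mp (by omega)
    set m := a / 4 with hm
    set Ts : ℕ → Finset ℝ := fun s => (CA P A).filter fun v => 4 * k * s ≤ NA P A v
      with hTs
    have hTs_ne : ∀ s ≤ m, (Ts s).Nonempty := by
      intro s hs
      obtain ⟨v, hvC, hvNA⟩ := NA_max hk P hAne
      refine ⟨v, Finset.mem_filter.mpr ⟨hvC, ?_⟩⟩
      rw [hvNA, hA]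
      have h4s : 4 * s ≤ a := by omega
      calc 4 * k * s = k * (4 * s) := by ring
        _ ≤ k * a := Nat.mul_le_mul_left k h4s
        _ = a * k := Nat.mul_comm k a
    set xs : ℕ → ℝ := fun s => if h : (Ts s).Nonempty then (Ts s).min' h else 0 with hxs
    have hxs_mem : ∀ s ≤ m, xs s ∈ Ts s := by
      intro s hs
      simp only [hxs, dif_pos (hTs_ne s hs)]
      exact Finset.min'_mem _ _
    have hxs_min : ∀ s ≤ m, ∀ v ∈ Ts s, xs s ≤ v := by
      intro s hs v hv
      simp only [hxs, dif_pos (hTs_ne s hs)]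
      exact Finset.min'_le _ _ hv
    set c : Fin (m + 1) → Fin n → ℝ :=
      fun s i => if (s : ℕ) = 0 then 1 else g P i (xs (s : ℕ)) with hc
    obtain ⟨χ1, hoff1, hbox1, hcons1, hfrac1⟩ :=
      exists_rounding c a A χ0 (by rw [← hA]; exact Finset.card_filter_le _ _) hbox
    have hsum1 : ∑ i ∈ A, χ1 i = ∑ i ∈ A, χ0 i := by
      have h0 := hcons1 ⟨0, by omega⟩
      simpa [hc] using h0
    have htest : ∀ s : ℕ, 1 ≤ s → s ≤ m →
        ∑ i ∈ A, (χ1 i - χ0 i) * g P i (xs s) = 0 := by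
      intro s h1 h2
      have hc1 := hcons1 ⟨s, by omega⟩
      simp only [hc, Fin.val_mk, if_neg (Nat.one_le_iff_ne_zero.mp h1)] at hc1
      have hexp : ∑ i ∈ A, (χ1 i - χ0 i) * g P i (xs s)
          = ∑ i ∈ A, χ1 i * g P i (xs s) - ∑ i ∈ A, χ0 i * g P i (xs s) := by
        rw [← Finset.sum_sub_distrib]
        exact Finset.sum_congr rfl (fun i _ => by ring)
      rw [hexp, hc1, sub_self]
    have hdelta : ∀ i ∈ A, |χ1 i - χ0 i| ≤ 2 :=
      fun i hi => abs_diff_le_two (hbox1 i hi) (hbox i hi)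
    have herr1 : ∀ x : ℝ, |∑ i ∈ A, (χ1 i - χ0 i) * g P i x| ≤ 8 := by
      intro x
      by_cases hsN : NA P A x < 4 * k
      · calc |∑ i ∈ A, (χ1 i - χ0 i) * g P i x|
            ≤ ∑ i ∈ A, |(χ1 i - χ0 i) * g P i x| := Finset.abs_sum_le_sum_abs _ _
          _ ≤ ∑ i ∈ A, 2 * g P i x := by
              apply Finset.sum_le_sum
              intro i hi
              rw [abs_mul, abs_of_nonneg (g_nonneg P i x)]
              exact mul_le_mul_of_nonneg_right (hdelta i hi) (g_nonneg P i x)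
          _ = 2 * ((NA P A x : ℝ) / k) := by rw [← Finset.mul_sum, sum_g]
          _ ≤ 8 := by
              have hNk : (NA P A x : ℝ) ≤ 4 * k := by exact_mod_cast hsN.le
              have : (NA P A x : ℝ) / k ≤ 4 := by
                rw [div_le_iff₀ hkR]; linarith
              linarith
      · push_neg at hsN
        set N := NA P A x with hN
        set s := N / (4 * k) with hs
        have h4kpos : 0 < 4 * k := by omega
        have hs1 : 1 ≤ s := (Nat.one_le_div_iff h4kpos).mpr hsN
        have hNa : N ≤ a * k := by rw [hN, ← hA]; exact NA_le P A x
        have hsm : s ≤ m := by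
          rw [hs, hm]
          calc N / (4 * k) ≤ (a * k) / (4 * k) := Nat.div_le_div_right hNa
            _ = a / 4 := Nat.mul_div_mul_right a 4 hk
        have h4ks : 4 * k * s ≤ N := by
          rw [hs]
          calc 4 * k * (N / (4 * k)) = N / (4 * k) * (4 * k) := Nat.mul_comm _ _
            _ ≤ N := Nat.div_mul_le_self N (4 * k)
        have hNlt : N < 4 * k * s + 4 * k := by
          have h1 : 4 * k * s + N % (4 * k) = N := by
            rw [hs]; exact Nat.div_add_mod N (4 * k)
          have h2 : N % (4 * k) < 4 * k := Nat.mod_lt N h4kpos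
          omega
        obtain ⟨v, hvC, hvx, hvNA⟩ := exists_le_eq P A x (by omega)
        have hvT : v ∈ Ts s := Finset.mem_filter.mpr ⟨hvC, by rw [hvNA]; exact h4ks⟩
        have hxsx : xs s ≤ x := le_trans (hxs_min s hsm v hvT) hvx
        have hxsNA : 4 * k * s ≤ NA P A (xs s) :=
          (Finset.mem_filter.mp (hxs_mem s hsm)).2
        have hNAle : NA P A (xs s) ≤ N := NA_mono P A hxsx
        have hgapN : N < 4 * k + NA P A (xs s) := by omega
        have hgap : (N : ℝ) - (NA P A (xs s) : ℝ) ≤ 4 * k := by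
          have : (N : ℝ) < 4 * k + (NA P A (xs s) : ℝ) := by exact_mod_cast hgapN
          linarith
        have hrw : ∑ i ∈ A, (χ1 i - χ0 i) * g P i x
            = ∑ i ∈ A, (χ1 i - χ0 i) * (g P i x - g P i (xs s)) := by
          have hexp : ∑ i ∈ A, (χ1 i - χ0 i) * (g P i x - g P i (xs s))
              = ∑ i ∈ A, (χ1 i - χ0 i) * g P i x
                - ∑ i ∈ A, (χ1 i - χ0 i) * g P i (xs s) := by
            rw [← Finset.sum_sub_distrib]
            exact Finset.sum_congr rfl (fun i _ => by ring)
          rw [hexp, htest s hs1 hsm, sub_zero]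
        rw [hrw]
        calc |∑ i ∈ A, (χ1 i - χ0 i) * (g P i x - g P i (xs s))|
            ≤ ∑ i ∈ A, |(χ1 i - χ0 i) * (g P i x - g P i (xs s))| :=
              Finset.abs_sum_le_sum_abs _ _
          _ ≤ ∑ i ∈ A, 2 * (g P i x - g P i (xs s)) := by
              apply Finset.sum_le_sum
              intro i hi
              have hgm : 0 ≤ g P i x - g P i (xs s) :=
                sub_nonneg.mpr (g_mono P i hxsx)
              rw [abs_mul, abs_of_nonneg hgm]
              exact mul_le_mul_of_nonneg_right (hdelta i hi) hgm
          _ = 2 * ((N : ℝ) / k - (NA P A (xs s) : ℝ) / k) := by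
              rw [← Finset.mul_sum, Finset.sum_sub_distrib, sum_g, sum_g]
          _ ≤ 8 := by
              have h1 : (N : ℝ) / k - (NA P A (xs s) : ℝ) / k
                  = ((N : ℝ) - (NA P A (xs s) : ℝ)) / k := by ring
              have h2 : ((N : ℝ) - (NA P A (xs s) : ℝ)) / k ≤ 4 := by
                rw [div_le_iff₀ hkR]; linarith
              rw [h1]; linarith
    -- recurse on the fractional part
    set A' := A.filter fun i => χ1 i ≠ 1 ∧ χ1 i ≠ -1 with hA'
    set a' := A'.card with ha'
    have hA'A : A' ⊆ A := Finset.filter_subset _ _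
    have ha'm : a' ≤ m + 1 := hfrac1
    have ha'lt : a' < a := by omega
    have ha'half : a' ≤ a / 2 := by omega
    set B := A \ A' with hB
    have hBpm : ∀ i ∈ B, χ1 i = 1 ∨ χ1 i = -1 := by
      intro i hi
      rcases Finset.mem_sdiff.mp hi with ⟨hiA, hiA'⟩
      by_contra h
      push_neg at h
      exact hiA' (Finset.mem_filter.mpr ⟨hiA, h.1, h.2⟩)
    set p := (B.filter fun i => χ1 i = 1).card with hp
    have hsumB : ∑ i ∈ B, χ1 i = 2 * p - B.card := sum_pm B χ1 hBpm
    have hsplitsum : ∑ i ∈ B, χ1 i + ∑ i ∈ A', χ1 i = ∑ i ∈ A, χ1 i :=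
      Finset.sum_sdiff hA'A
    have hsumA : ∑ i ∈ A, χ1 i = (z : ℝ) := by rw [hsum1, hz]
    set z' : ℤ := z - 2 * p + B.card with hz'
    have hz'sum : ∑ i ∈ A', χ1 i = (z' : ℝ) := by
      push_cast [hz']
      linarith
    have hcards : B.card + a' = a := by
      rw [hB, ha', ← hA]
      exact Finset.card_sdiff_add_card_eq_card hA'A
    have hpar' : Even (z' + a') := by
      obtain ⟨w, hw⟩ := hpar
      refine ⟨w - p, ?_⟩
      have h1 : (B.card : ℤ) + (a' : ℤ) = (a : ℤ) := by exact_mod_cast hcards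
      omega
    obtain ⟨χ, hoffA', hpmA', hsumA', herrA'⟩ :=
      IH a' ha'lt A' rfl χ1 (fun i hi => hbox1 i (hA'A hi)) z' hz'sum hpar'
    refine ⟨χ, ?_, ?_, ?_, ?_⟩
    · intro i hiA
      rw [hoffA' i (fun h => hiA (hA'A h)), hoff1 i hiA]
    · intro i hiA
      by_cases hiA' : i ∈ A'
      · exact hpmA' i hiA'
      · rw [hoffA' i hiA']
        exact hBpm i (Finset.mem_sdiff.mpr ⟨hiA, hiA'⟩)
    · have hsB : ∑ i ∈ B, χ i = ∑ i ∈ B, χ1 i :=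
        Finset.sum_congr rfl fun i hi => hoffA' i (Finset.mem_sdiff.mp hi).2
      have hsd : ∑ i ∈ B, χ i + ∑ i ∈ A', χ i = ∑ i ∈ A, χ i :=
        Finset.sum_sdiff hA'A
      rw [← hsd, hsB, hsumB, hsumA']
      push_cast [hz']
      ring
    · intro x
      have hdecomp : ∑ i ∈ A, (χ i - χ0 i) * g P i x
          = ∑ i ∈ A, (χ i - χ1 i) * g P i x + ∑ i ∈ A, (χ1 i - χ0 i) * g P i x := by
        rw [← Finset.sum_add_distrib]
        exact Finset.sum_congr rfl fun i _ => by ring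
      have hsub : ∑ i ∈ A, (χ i - χ1 i) * g P i x
          = ∑ i ∈ A', (χ i - χ1 i) * g P i x := by
        symm
        apply Finset.sum_subset hA'A
        intro i hiA hiA'
        rw [hoffA' i hiA']
        ring
      have hlog : (Nat.log 2 a' : ℝ) + 1 ≤ (Nat.log 2 a : ℝ) := by
        have h1 : Nat.log 2 a' ≤ Nat.log 2 (a / 2) := Nat.log_mono_right ha'half
        have h2 : Nat.log 2 (a / 2) = Nat.log 2 a - 1 := Nat.log_div_base 2 a
        have h3 : 0 < Nat.log 2 a := Nat.log_pos (by norm_num) (by omega)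
        have h4 : Nat.log 2 a' + 1 ≤ Nat.log 2 a := by omega
        exact_mod_cast h4
      calc |∑ i ∈ A, (χ i - χ0 i) * g P i x|
          ≤ |∑ i ∈ A', (χ i - χ1 i) * g P i x|
            + |∑ i ∈ A, (χ1 i - χ0 i) * g P i x| := by
            rw [hdecomp, hsub]
            exact abs_add_le _ _
        _ ≤ (8 * Nat.log 2 a' + 8) + 8 := add_le_add (herrA' x) (herr1 x)
        _ ≤ 8 * Nat.log 2 a + 8 := by linarith

end Stmt6Aux

set_option maxHeartbeats 1000000

/-- There is an absolute constant `C > 0` such that for every uncertain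
point set `P` of `n ≥ 2` points each with `k` locations in `ℝ¹`,
`RE-disc(P, 𝓘₊) ≤ C √k log n`; i.e., there is a balanced `±1` coloring `χ`
(`|P_χ^+| = ⌊n/2⌋`) with `RE-disc_χ(P, r) ≤ C √k log n` for all ranges `r ∈ 𝓘₊`. -/
theorem stmt6 :
    ∃ C : ℝ, 0 < C ∧
      ∀ (n k : ℕ) (P : Fin n → Fin k → ℝ), 2 ≤ n → 0 < k →
        ∃ χ : Fin n → ℤ, (∀ i, χ i = 1 ∨ χ i = -1) ∧ (Pplus χ).card = n / 2 ∧
          ∀ r ∈ IicFam, REdisc P χ r ≤ C * Real.sqrt k * Real.log n := by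
  refine ⟨60, by norm_num, ?_⟩
  intro n k P hn hk
  have hn0 : 0 < n := by omega
  have hnR : (0:ℝ) < n := by exact_mod_cast hn0
  set M : ℕ := n / 2 with hM
  set z : ℤ := 2 * (M : ℤ) - n with hzdef
  have hz01 : z = 0 ∨ z = -1 := by
    have h1 : 2 * M ≤ n := by omega
    have h2 : n ≤ 2 * M + 1 := by omega
    omega
  have hzabs : |(z : ℝ)| ≤ 1 := by
    rcases hz01 with h | h <;> rw [h] <;> norm_num
  set χ0 : Fin n → ℝ := fun _ => (z : ℝ) / n with hχ0
  have hbox : ∀ i ∈ (Finset.univ : Finset (Fin n)), |χ0 i| ≤ 1 := by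
    intro i _
    rw [hχ0, abs_div, abs_of_pos hnR]
    rw [div_le_one hnR]
    calc |(z:ℝ)| ≤ 1 := hzabs
      _ ≤ n := by exact_mod_cast hn0
  have hsum0 : ∑ i : Fin n, χ0 i = (z : ℝ) := by
    rw [hχ0, Finset.sum_const, Finset.card_univ, Fintype.card_fin, nsmul_eq_mul]
    field_simp
  have hpar : Even (z + n) := by
    refine ⟨(M : ℤ), ?_⟩
    rw [hzdef]; ring
  obtain ⟨χr, -, hpm, hsum, herr⟩ :=
    Stmt6Aux.main_lemma hk P n Finset.univ (by simp) χ0 hbox z hsum0 hpar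
  set χ : Fin n → ℤ := fun i => if χr i = 1 then 1 else -1 with hχ
  have hχpm : ∀ i, χ i = 1 ∨ χ i = -1 := by
    intro i
    by_cases h : χr i = 1
    · left; simp only [hχ]; rw [if_pos h]
    · right; simp only [hχ]; rw [if_neg h]
  have hcast : ∀ i, (χ i : ℝ) = χr i := by
    intro i
    rcases hpm i (Finset.mem_univ i) with h | h
    · simp only [hχ]; rw [if_pos h, h]; norm_num
    · have hne : ¬ χr i = 1 := by rw [h]; norm_num
      simp only [hχ]; rw [if_neg hne, h]; norm_num
  have hfilter_eq : Pplus χ = Finset.univ.filter fun i => χr i = 1 := by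
    unfold Pplus
    apply Finset.filter_congr
    intro i _
    constructor
    · intro h
      have := hcast i
      rw [h] at this
      exact_mod_cast this.symm
    · intro h
      simp only [hχ]; rw [if_pos h]
  -- the number of +1s
  set q := (Finset.univ.filter fun i => χr i = 1).card with hqdef
  have hsum_pm := Stmt6Aux.sum_pm Finset.univ χr (fun i _ => hpm i (Finset.mem_univ i))
  have hqR : (q : ℝ) = (M : ℝ) := by
    rw [hsum] at hsum_pm
    have hcu : ((Finset.univ : Finset (Fin n)).card : ℝ) = n := by
      rw [Finset.card_univ, Fintype.card_fin]
    rw [hcu, ← hqdef] at hsum_pm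
    have hzR : (z : ℝ) = 2 * (M : ℝ) - n := by
      rw [hzdef]
      push_cast
      ring
    rw [hzR] at hsum_pm
    linarith
  have hqM : q = M := by exact_mod_cast hqR
  have hcard : (Pplus χ).card = n / 2 := by
    rw [hfilter_eq, ← hqdef, hqM, hM]
  refine ⟨χ, hχpm, hcard, ?_⟩
  rintro r ⟨x, rfl⟩
  -- notation
  set G : ℝ := ∑ i : Fin n, Stmt6Aux.g P i x with hG
  set X : ℝ := ∑ i : Fin n, χr i * Stmt6Aux.g P i x with hX
  set L : ℝ := (Nat.log 2 n : ℝ) with hL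
  have hL0 : 0 ≤ L := Nat.cast_nonneg _
  have hG0 : 0 ≤ G :=
    Finset.sum_nonneg fun i _ => Stmt6Aux.g_nonneg P i x
  have hGn : G ≤ n := by
    calc G ≤ ∑ _i : Fin n, (1:ℝ) :=
          Finset.sum_le_sum fun i _ => Stmt6Aux.g_le_one hk P i x
      _ = n := by simp
  have hXbound : |X| ≤ 8 * L + 9 := by
    have h1 : X = (∑ i : Fin n, (χr i - χ0 i) * Stmt6Aux.g P i x)
        + ((z:ℝ)/n) * G := by
      rw [hX, hG, Finset.mul_sum, ← Finset.sum_add_distrib]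
      exact Finset.sum_congr rfl fun i _ => by rw [hχ0]; ring
    have h2 : |((z:ℝ)/n) * G| ≤ 1 := by
      rw [abs_mul, abs_of_nonneg hG0, abs_div, abs_of_pos hnR]
      calc |(z:ℝ)|/n * G ≤ 1/n * n := by
            refine mul_le_mul ?_ hGn hG0 (by positivity)
            exact div_le_div_of_nonneg_right hzabs (le_of_lt hnR)
        _ = 1 := by field_simp
    calc |X| ≤ |∑ i : Fin n, (χr i - χ0 i) * Stmt6Aux.g P i x| + |((z:ℝ)/n) * G| := by
          rw [h1]; exact abs_add_le _ _
      _ ≤ (8 * L + 8) + 1 := add_le_add (herr x) h2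
      _ = 8 * L + 9 := by ring
  -- compute REexp values
  have hgdef : ∀ i, probIn (P i) (Set.Iic x) = Stmt6Aux.g P i x := fun i => rfl
  have hpossum : ∑ i ∈ Pplus χ, probIn (P i) (Set.Iic x) = (G + X) / 2 := by
    simp only [hgdef]
    rw [hfilter_eq, Finset.sum_filter]
    have hterm : ∀ i ∈ (Finset.univ : Finset (Fin n)),
        (if χr i = 1 then Stmt6Aux.g P i x else 0)
          = Stmt6Aux.g P i x / 2 + (χr i * Stmt6Aux.g P i x) / 2 := by
      intro i _
      rcases hpm i (Finset.mem_univ i) with h | h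
      · rw [if_pos h, h]; ring
      · rw [if_neg (by rw [h]; norm_num), h]; ring
    rw [Finset.sum_congr rfl hterm, Finset.sum_add_distrib,
      ← Finset.sum_div, ← Finset.sum_div, ← hG, ← hX]
    ring
  have hREpos : REexp P (Pplus χ) (Set.Iic x) = ((G + X) / 2) / q := by
    unfold REexp
    rw [hpossum, hfilter_eq, ← hqdef]
  have hREuniv : REexp P Finset.univ (Set.Iic x) = G / n := by
    unfold REexp
    simp only [hgdef]
    rw [← hG, Finset.card_univ, Fintype.card_fin]
  -- numeric facts about q
  have hq2n : 2 * q ≤ n ∧ n ≤ 2 * q + 1 := by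
    have := hcard
    rw [hfilter_eq, ← hqdef] at this
    omega
  have hq1 : 1 ≤ q := by omega
  have hqR0 : (0:ℝ) < q := by exact_mod_cast hq1
  have h2Q : 2 * (q:ℝ) ≤ n := by exact_mod_cast hq2n.1
  have hN2Q : (n:ℝ) ≤ 2 * q + 1 := by exact_mod_cast hq2n.2
  have hN4Q : (n:ℝ) ≤ 4 * q := by
    have : (1:ℝ) ≤ q := by exact_mod_cast hq1
    linarith
  -- bound REdisc
  have hmain : REdisc P χ (Set.Iic x) ≤ 2 * (1 + |X|) := by
    unfold REdisc
    rw [hREpos, hREuniv]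
    have hrw : (G + X) / 2 / q - G / n
        = (((n:ℝ) - 2 * q) * G + n * X) / (2 * q * n) := by
      field_simp
      ring
    rw [hrw, abs_div, abs_of_pos (by positivity : (0:ℝ) < 2 * (q:ℝ) * n)]
    rw [show (n:ℝ) * (|((n:ℝ) - 2*q) * G + n * X| / (2 * q * n))
        = |((n:ℝ) - 2*q) * G + n * X| / (2 * q) by field_simp]
    have hnum : |((n:ℝ) - 2*q) * G + n * X| ≤ n + n * |X| := by
      calc |((n:ℝ) - 2*q) * G + n * X| ≤ |((n:ℝ) - 2*q) * G| + |(n:ℝ) * X| :=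
            abs_add_le _ _
        _ ≤ n + n * |X| := by
            apply add_le_add
            · rw [abs_of_nonneg (by nlinarith : (0:ℝ) ≤ ((n:ℝ) - 2*q) * G)]
              nlinarith
            · rw [abs_mul, abs_of_pos hnR]
      -- done
    rw [div_le_iff₀ (by positivity : (0:ℝ) < 2 * (q:ℝ))]
    calc |((n:ℝ) - 2*q) * G + n * X| ≤ n + n * |X| := hnum
      _ = (n:ℝ) * (1 + |X|) := by ring
      _ ≤ (4 * q) * (1 + |X|) := by
          apply mul_le_mul_of_nonneg_right hN4Q
          positivity
      _ = 2 * (1 + |X|) * (2 * q) := by ring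
  -- final numeric bound
  have hlog2 : (0.6931471803 : ℝ) < Real.log 2 := Real.log_two_gt_d9
  have hlogn2 : Real.log 2 ≤ Real.log n := by
    apply Real.log_le_log (by norm_num)
    exact_mod_cast hn
  have hlogn0 : 0 < Real.log n := by linarith
  have hLlog : L * Real.log 2 ≤ Real.log n := by
    have h1 : (2:ℕ) ^ (Nat.log 2 n) ≤ n := Nat.pow_log_le_self 2 (by omega)
    have h2 : ((2:ℝ)) ^ (Nat.log 2 n) ≤ (n:ℝ) := by exact_mod_cast h1
    have h3 := Real.log_le_log (by positivity) h2
    rw [Real.log_pow] at h3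
    exact h3
  have hsqrt : 1 ≤ Real.sqrt k := by
    rw [show (1:ℝ) = Real.sqrt 1 by simp]
    apply Real.sqrt_le_sqrt
    exact_mod_cast hk
  calc REdisc P χ (Set.Iic x) ≤ 2 * (1 + |X|) := hmain
    _ ≤ 2 * (1 + (8 * L + 9)) := by
        have := hXbound
        linarith
    _ = 16 * L + 20 := by ring
    _ ≤ 24 * (L * Real.log 2) + 29 * Real.log 2 := by nlinarith
    _ ≤ 24 * Real.log n + 29 * Real.log n := by
        apply add_le_add
        · linarith
        · linarith
    _ = 53 * Real.log n := by ring
    _ ≤ 60 * Real.sqrt k * Real.log n := by nlinarith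


end
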